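/- Let φ : X → H be a weakly measurable function that is a Bessel mapping with bound M but not μ-total. Then there is no injective positive self-adjoint operator G on H with φ_x ∈ D(G) for a.e. x such that Gφ (x ↦ Gφ_x) is a continuous frame for H. -/

import Mathlib

open MeasureTheory
open scoped ENNReal NNReal

local notation "⟪" x ", " y "⟫" => @inner ℂ _ _ x y

/-- A densely defined operator `T` is self-adjoint: symmetric, and every weak-adjoint pair
belongs to its graph. -/
def IsSelfAdjointPMap {H : Type*} [NormedAddCommGroup H] [InnerProductSpace ℂ H]
    (T : H →ₗ.[ℂ] H) : Prop :=
  Dense (T.domain : Set H) ∧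
  (∀ f g : T.domain, ⟪T f, (g : H)⟫ = ⟪(f : H), T g⟫) ∧
  (∀ g h : H, (∀ f : T.domain, ⟪T f, g⟫ = ⟪(f : H), h⟫) →
    ∃ hg : g ∈ T.domain, T ⟨g, hg⟩ = h)

/-- if `φ` is a weakly measurable Bessel mapping (bound `M`) which is not
`μ`-total, then no injective positive self-adjoint operator `G` with `φ_x ∈ D(G)` turns `φ`
into a continuous frame `Gφ`. -/
theorem stmt5 {H X : Type*}
    [NormedAddCommGroup H] [InnerProductSpace ℂ H] [CompleteSpace H]
    [MeasurableSpace X] (μ : Measure X) (φ : X → H)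
    (hwm : ∀ f : H, AEStronglyMeasurable (fun x => ⟪f, φ x⟫) μ)
    (M : ℝ) (hbessel : ∀ f : H,
      ∫⁻ x, (‖⟪f, φ x⟫‖₊ : ℝ≥0∞) ^ 2 ∂μ ≤ ENNReal.ofReal (M * ‖f‖ ^ 2))
    (hnontotal : ∃ f : H, f ≠ 0 ∧ ∀ᵐ x ∂μ, ⟪f, φ x⟫ = 0) :
    ¬ ∃ (G : H →ₗ.[ℂ] H) (hmem : ∀ x, φ x ∈ G.domain),
      IsSelfAdjointPMap G ∧
      (∀ f : G.domain, 0 ≤ (⟪G f, (f : H)⟫).re) ∧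
      (∀ f : G.domain, G f = 0 → (f : H) = 0) ∧
      ∃ m' M' : ℝ, 0 < m' ∧ ∀ f : H,
        ENNReal.ofReal (m' * ‖f‖ ^ 2) ≤
            ∫⁻ x, (‖⟪f, G ⟨φ x, hmem x⟩⟫‖₊ : ℝ≥0∞) ^ 2 ∂μ ∧
        ∫⁻ x, (‖⟪f, G ⟨φ x, hmem x⟩⟫‖₊ : ℝ≥0∞) ^ 2 ∂μ ≤ ENNReal.ofReal (M' * ‖f‖ ^ 2) := by
  rintro ⟨G, hmem, ⟨hdense, hsym, hadj⟩, hpos, hinj, m', M', hm', hframe⟩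
  obtain ⟨f, hf0, hae⟩ := hnontotal
  -- the range of G is dense
  set R : Submodule ℂ H := LinearMap.range G.toFun with hR
  have hRorth : Rᗮ = ⊥ := by
    rw [Submodule.eq_bot_iff]
    intro h hh
    have key : ∀ u : G.domain, ⟪G u, h⟫ = ⟪(u : H), (0 : H)⟫ := by
      intro u
      rw [inner_zero_right]
      exact hh (G u) ⟨u, rfl⟩
    obtain ⟨hg, hGg⟩ := hadj h 0 key
    exact hinj ⟨h, hg⟩ hGg
  have hRdense : Dense (R : Set H) := by
    rw [Submodule.dense_iff_topologicalClosure_eq_top,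
      Submodule.topologicalClosure_eq_top_iff]
    exact hRorth
  -- key inequality
  have hkey : ∀ g : G.domain, m' * ‖(g : H)‖ ^ 2 ≤ |M| * ‖G g - f‖ ^ 2 := by
    intro g
    have h1 := (hframe (g : H)).1
    have h2 : ∫⁻ x, (‖⟪(g : H), G ⟨φ x, hmem x⟩⟫‖₊ : ℝ≥0∞) ^ 2 ∂μ
        = ∫⁻ x, (‖⟪G g - f, φ x⟫‖₊ : ℝ≥0∞) ^ 2 ∂μ := by
      refine lintegral_congr_ae ?_
      filter_upwards [hae] with x hx
      have e1 : ⟪(g : H), G ⟨φ x, hmem x⟩⟫ = ⟪G g, φ x⟫ := (hsym g ⟨φ x, hmem x⟩).symm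
      have e2 : ⟪G g - f, φ x⟫ = ⟪G g, φ x⟫ := by
        rw [inner_sub_left, hx, sub_zero]
      rw [e1, e2]
    have h3 := hbessel (G g - f)
    have h4 : ENNReal.ofReal (m' * ‖(g : H)‖ ^ 2)
        ≤ ENNReal.ofReal (|M| * ‖G g - f‖ ^ 2) := by
      refine le_trans h1 (le_trans (h2.le.trans h3) (ENNReal.ofReal_le_ofReal ?_))
      nlinarith [le_abs_self M, sq_nonneg ‖G g - f‖]
    have h5 : (0:ℝ) ≤ |M| * ‖G g - f‖ ^ 2 := by positivity
    exact (ENNReal.ofReal_le_ofReal_iff h5).mp h4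
  -- bound on ‖g‖
  have hnorm : ∀ g : G.domain, ‖(g : H)‖ ≤ Real.sqrt (|M| / m') * ‖G g - f‖ := by
    intro g
    have h1 : ‖(g : H)‖ ^ 2 ≤ (Real.sqrt (|M| / m') * ‖G g - f‖) ^ 2 := by
      rw [mul_pow, Real.sq_sqrt (by positivity : (0:ℝ) ≤ |M| / m'),
        div_mul_eq_mul_div, le_div_iff₀ hm']
      nlinarith [hkey g]
    have h2 := Real.sqrt_le_sqrt h1
    rwa [Real.sqrt_sq (norm_nonneg _), Real.sqrt_sq (by positivity)] at h2
  -- f is orthogonal to the (dense) domain of G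
  have horth : ∀ u : G.domain, ⟪f, (u : H)⟫ = 0 := by
    intro u
    have hbound : ∀ ε : ℝ, 0 < ε → ‖⟪f, (u : H)⟫‖ ≤ ε := by
      intro ε hε
      set s : ℝ := Real.sqrt (|M| / m') with hs
      have hs0 : 0 ≤ s := Real.sqrt_nonneg _
      set C : ℝ := 1 + ‖(u : H)‖ + ‖G u‖ * s with hC
      have hC1 : (1:ℝ) ≤ C := by
        have h0 : (0:ℝ) ≤ ‖G u‖ * s := by positivity
        have h1 := norm_nonneg (u : H)
        simp only [hC]; linarith
      have hCpos : (0:ℝ) < C := lt_of_lt_of_le one_pos hC1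
      have hδpos : 0 < ε / C := div_pos hε hCpos
      obtain ⟨y, hyR, hy⟩ := hRdense.exists_dist_lt f hδpos
      obtain ⟨g, rfl⟩ := hyR
      have hd : ‖G g - f‖ ≤ ε / C := by
        rw [dist_eq_norm, norm_sub_rev] at hy
        exact le_of_lt hy
      have e1 : ⟪f, (u : H)⟫ = ⟪f - G g, (u : H)⟫ + ⟪(g : H), G u⟫ := by
        rw [inner_sub_left, ← hsym g u]; ring
      have b1 : ‖⟪f - G g, (u : H)⟫‖ ≤ (ε / C) * ‖(u : H)‖ := by
        refine (norm_inner_le_norm _ _).trans ?_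
        refine mul_le_mul_of_nonneg_right ?_ (norm_nonneg _)
        rwa [norm_sub_rev] at hd
      have b2 : ‖⟪(g : H), G u⟫‖ ≤ s * (ε / C) * ‖G u‖ := by
        refine (norm_inner_le_norm _ _).trans ?_
        refine mul_le_mul_of_nonneg_right ?_ (norm_nonneg _)
        exact (hnorm g).trans (by nlinarith [hd])
      calc ‖⟪f, (u : H)⟫‖ ≤ ‖⟪f - G g, (u : H)⟫‖ + ‖⟪(g : H), G u⟫‖ := by
            rw [e1]; exact norm_add_le _ _
        _ ≤ (ε / C) * ‖(u : H)‖ + s * (ε / C) * ‖G u‖ := add_le_add b1 b2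
        _ = (ε / C) * (‖(u : H)‖ + ‖G u‖ * s) := by ring
        _ ≤ (ε / C) * C := by
            refine mul_le_mul_of_nonneg_left ?_ (le_of_lt hδpos)
            simp only [hC]; linarith
        _ = ε := div_mul_cancel₀ ε (ne_of_gt hCpos)
      done
    have : ‖⟪f, (u : H)⟫‖ ≤ 0 := by
      refine le_of_forall_pos_le_add (fun ε hε => ?_)
      simpa using hbound ε hε
    exact norm_le_zero_iff.mp this
  exact hf0 (hdense.eq_zero_of_inner_left ℂ (fun v hv => horth ⟨v, hv⟩))
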